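/- Assume QV = ρωV with ρ > 0, |ω| = 1, and hypothesis (jsr_λ) with λ < ρ. Then the unique continuous solution F of the basic dilation equation is Hölder with exponent log_B(ρ/λ): there is a constant c ≥ 0 such that ‖F(y) − F(x)‖ ≤ c |y − x|^{log_B(ρ/λ)} for all x, y ∈ [0,1]. -/

import Mathlib

open scoped Classical BigOperators
open Filter Asymptotics

attribute [local instance] Matrix.linftyOpNormedAddCommGroup Matrix.linftyOpNormedRing

noncomputable section

def wordProd {B d : ℕ} (A : Fin B → Matrix (Fin d) (Fin d) ℂ) {K : ℕ}
    (w : Fin K → Fin B) : Matrix (Fin d) (Fin d) ℂ :=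
  ((List.ofFn w).map A).prod

def wordVal {B K : ℕ} (w : Fin K → Fin B) : ℝ :=
  ∑ k : Fin K, (w k : ℝ) / (B : ℝ) ^ ((k : ℕ) + 1)

def runSum {B d : ℕ} (A : Fin B → Matrix (Fin d) (Fin d) ℂ) (C : Fin d → ℂ)
    (K : ℕ) (x : ℝ) : Fin d → ℂ :=
  ∑ w : Fin K → Fin B, if wordVal w ≤ x then (wordProd A w).mulVec C else 0

def DilationEq {B d : ℕ} (A : Fin B → Matrix (Fin d) (Fin d) ℂ) (ρ : ℝ) (ω : ℂ)
    (V : Fin d → ℂ) (Φ : ℝ → Fin d → ℂ) : Prop :=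
  Φ 0 = 0 ∧ Φ 1 = V ∧
    ∀ r : Fin B, ∀ x : ℝ, (r : ℝ) / B ≤ x → x < ((r : ℝ) + 1) / B →
      Φ x = ((ρ : ℂ) * ω)⁻¹ •
        ((∑ s ∈ Finset.univ.filter fun s : Fin B => s < r, (A s).mulVec V) +
          (A r).mulVec (Φ (B * x - r)))

namespace DilAux

variable {B d K : ℕ}

lemma wordProd_zero (A : Fin B → Matrix (Fin d) (Fin d) ℂ) (w : Fin 0 → Fin B) :
    wordProd A w = 1 := by simp [wordProd]

lemma wordProd_cons (A : Fin B → Matrix (Fin d) (Fin d) ℂ) (r : Fin B) (w : Fin K → Fin B) :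
    wordProd A (Fin.cons r w) = A r * wordProd A w := by
  simp [wordProd, List.ofFn_succ]

lemma wordProd_snoc (A : Fin B → Matrix (Fin d) (Fin d) ℂ) (w : Fin K → Fin B) (s : Fin B) :
    wordProd A (Fin.snoc w s) = wordProd A w * A s := by
  rw [wordProd, List.ofFn_succ']
  simp [wordProd, List.concat_eq_append]

lemma wordProd_add {m n : ℕ} (A : Fin B → Matrix (Fin d) (Fin d) ℂ) (w : Fin (m + n) → Fin B) :
    wordProd A w = wordProd A (fun i => w (Fin.castAdd n i)) *
      wordProd A (fun j => w (Fin.natAdd m j)) := by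
  rw [wordProd, List.ofFn_add]
  simp [wordProd]
  rfl

lemma wordVal_zero (w : Fin 0 → Fin B) : wordVal w = 0 := by simp [wordVal]

lemma wordVal_cons (r : Fin B) (w : Fin K → Fin B) :
    wordVal (Fin.cons r w) = (r : ℝ) / B + wordVal w / B := by
  rw [wordVal, Fin.sum_univ_succ]
  simp only [Fin.cons_zero, Fin.cons_succ, wordVal, Finset.sum_div]
  congr 1
  · norm_num
  · refine Finset.sum_congr rfl fun k _ => ?_
    rw [div_div, ← pow_succ]
    rfl

lemma wordVal_snoc (w : Fin K → Fin B) (s : Fin B) :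
    wordVal (Fin.snoc w s) = wordVal w + (s : ℝ) / (B : ℝ) ^ (K + 1) := by
  rw [wordVal, Fin.sum_univ_castSucc]
  simp [wordVal, Fin.snoc_castSucc]

lemma wordVal_nonneg (w : Fin K → Fin B) : 0 ≤ wordVal w := by
  refine Finset.sum_nonneg fun k _ => ?_
  positivity

lemma wordVal_lt_one (hB : 1 ≤ B) (w : Fin K → Fin B) : wordVal w < 1 := by
  induction K with
  | zero => simp [wordVal_zero]
  | succ n ih =>
    have hBR : (1:ℝ) ≤ B := by exact_mod_cast hB
    rw [← Fin.cons_self_tail w, wordVal_cons]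
    have h1 : (w 0 : ℝ) ≤ (B : ℝ) - 1 := by
      have h := (w 0).is_lt
      have : ((w 0 : ℕ) : ℝ) + 1 ≤ (B : ℝ) := by exact_mod_cast h
      linarith
    have h2 : wordVal (Fin.tail w) < 1 := ih _
    have hB0 : (0:ℝ) < B := by linarith
    rw [← add_div, div_lt_one hB0]
    linarith

/-- The numerator `N w = B^K ⬝ (0.w)`. -/
def wordNum (w : Fin K → Fin B) : ℕ := ∑ k : Fin K, (w k : ℕ) * B ^ (K - 1 - (k : ℕ))

lemma wordNum_cast (hB : 1 ≤ B) (w : Fin K → Fin B) :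
    (wordNum w : ℝ) = (B : ℝ) ^ K * wordVal w := by
  rw [wordNum, wordVal, Finset.mul_sum]
  push_cast
  refine Finset.sum_congr rfl fun k _ => ?_
  have hk : (k : ℕ) + 1 ≤ K := k.is_lt
  have hBR : (0:ℝ) < B := by exact_mod_cast Nat.lt_of_lt_of_le Nat.zero_lt_one hB
  rw [mul_div_assoc']
  rw [eq_div_iff (by positivity), mul_comm ((B:ℝ)^K) _, mul_assoc, ← pow_add]
  congr 2
  omega

lemma wordNum_injective (hB : 1 ≤ B) : Function.Injective (wordNum (B := B) (K := K)) := by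
  intro w v h
  have key : ∀ u : Fin K → Fin B, wordNum u = (finFunctionFinEquiv (u ∘ Fin.rev) : ℕ) := by
    intro u
    rw [finFunctionFinEquiv_apply, wordNum]
    rw [← Equiv.sum_comp (Fin.revPerm) (fun k : Fin K => ((u ∘ Fin.rev) k : ℕ) * B ^ (k : ℕ))]
    refine Finset.sum_congr rfl fun k _ => ?_
    simp only [Function.comp, Fin.revPerm_apply, Fin.rev_rev]
    congr 1
    rw [Fin.val_rev]
    congr 1
    omega
  rw [key, key] at h
  have := finFunctionFinEquiv.injective (Fin.val_injective (by exact_mod_cast h))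
  have h2 : w ∘ Fin.rev = v ∘ Fin.rev := this
  funext i
  have := congrFun h2 (Fin.rev i)
  simpa [Fin.rev_rev] using this

lemma wordVal_injective (hB : 1 ≤ B) :
    Function.Injective (wordVal (B := B) (K := K)) := by
  intro w v h
  refine wordNum_injective hB ?_
  have hBR : (0:ℝ) < B := by exact_mod_cast Nat.lt_of_lt_of_le Nat.zero_lt_one hB
  have : (wordNum w : ℝ) = (wordNum v : ℝ) := by
    rw [wordNum_cast hB, wordNum_cast hB, h]
  exact_mod_cast this

/-- Two distinct words have values at distance at least `B^{-K}`. -/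
lemma wordVal_spacing (hB : 1 ≤ B) {w v : Fin K → Fin B} (hne : w ≠ v) :
    ((B:ℝ) ^ K)⁻¹ ≤ |wordVal w - wordVal v| := by
  have hBR : (0:ℝ) < B := by exact_mod_cast Nat.lt_of_lt_of_le Nat.zero_lt_one hB
  have hnum : wordNum w ≠ wordNum v := fun h => hne (wordNum_injective hB h)
  have h1 : (1:ℝ) ≤ |(wordNum w : ℝ) - (wordNum v : ℝ)| := by
    have h0 : (wordNum w : ℤ) ≠ (wordNum v : ℤ) := by exact_mod_cast hnum
    have := Int.one_le_abs (sub_ne_zero.mpr h0)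
    exact_mod_cast this
  rw [wordNum_cast hB, wordNum_cast hB, ← mul_sub, abs_mul, abs_of_pos (by positivity)] at h1
  rw [inv_le_iff_one_le_mul₀ (by positivity)]
  linarith [h1]

/-- at most one word value in a half-open interval of length `≤ B^{-K}`. -/
lemma wordVal_unique_Ioc (hB : 1 ≤ B) {a b : ℝ} (hab : b - a ≤ ((B:ℝ) ^ K)⁻¹)
    {w v : Fin K → Fin B} (hw : a < wordVal w ∧ wordVal w ≤ b)
    (hv : a < wordVal v ∧ wordVal v ≤ b) : w = v := by
  by_contra hne
  have := wordVal_spacing hB hne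
  have habs : |wordVal w - wordVal v| < b - a := by
    rw [abs_sub_lt_iff]
    constructor <;> linarith [hw.1, hw.2, hv.1, hv.2]
  linarith


/-- sum over all words of length `K+1` via first digit -/
lemma sum_words_cons {M : Type*} [AddCommMonoid M] (f : (Fin (K+1) → Fin B) → M) :
    ∑ w : Fin (K+1) → Fin B, f w = ∑ r : Fin B, ∑ w : Fin K → Fin B, f (Fin.cons r w) := by
  rw [← Equiv.sum_comp (Fin.consEquiv (fun _ => Fin B)) f]
  rw [Fintype.sum_prod_type]
  rfl

lemma sum_words_snoc {M : Type*} [AddCommMonoid M] (f : (Fin (K+1) → Fin B) → M) :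
    ∑ w : Fin (K+1) → Fin B, f w = ∑ w : Fin K → Fin B, ∑ s : Fin B, f (Fin.snoc w s) := by
  rw [← Equiv.sum_comp (Fin.snocEquiv (fun _ => Fin B)) f]
  rw [Fintype.sum_prod_type]
  rw [Finset.sum_comm]
  rfl

lemma sum_wordProd (A : Fin B → Matrix (Fin d) (Fin d) ℂ) :
    ∀ K : ℕ, ∑ w : Fin K → Fin B, wordProd A w = (∑ r, A r) ^ K := by
  intro K
  induction K with
  | zero => simp [wordProd_zero]
  | succ n ih =>
    rw [sum_words_cons (fun w => wordProd A w)]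
    simp only [wordProd_cons]
    rw [pow_succ']
    rw [← ih, Finset.sum_mul]
    refine Finset.sum_congr rfl fun r _ => ?_
    rw [Finset.mul_sum]

lemma norm_wordProd_le_pow (hd : 0 < d) (A : Fin B → Matrix (Fin d) (Fin d) ℂ)
    {m : ℝ} (hm : ∀ r, ‖A r‖ ≤ m) :
    ∀ K : ℕ, ∀ w : Fin K → Fin B, ‖wordProd A w‖ ≤ m ^ K := by
  haveI : Nonempty (Fin d) := Fin.pos_iff_nonempty.mp hd
  intro K
  induction K with
  | zero => intro w; rw [wordProd_zero]; simp
  | succ n ih =>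
    intro w
    rw [← Fin.cons_self_tail w, wordProd_cons, pow_succ']
    calc ‖A (w 0) * wordProd A (Fin.tail w)‖ ≤ ‖A (w 0)‖ * ‖wordProd A (Fin.tail w)‖ :=
          norm_mul_le _ _
    _ ≤ m * m ^ n := by
        refine mul_le_mul (hm _) (ih _) (norm_nonneg _) ?_
        exact le_trans (norm_nonneg _) (hm (w 0))

/-- The key JSR-based uniform bound `‖A_w‖ ≤ C₀ λ^K`. -/
lemma norm_wordProd_le (hd : 0 < d) (hB : 0 < B) (A : Fin B → Matrix (Fin d) (Fin d) ℂ)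
    {lam : ℝ} (hlam : 0 < lam) {T : ℕ} (hT : 1 ≤ T)
    (hjsrT : ∀ w : Fin T → Fin B, ‖wordProd A w‖ ≤ lam ^ T)
    {m : ℝ} (hm : ∀ r, ‖A r‖ ≤ m) :
    ∀ K : ℕ, ∀ w : Fin K → Fin B,
      ‖wordProd A w‖ ≤ (max 1 (m / lam)) ^ T * lam ^ K := by
  haveI : Nonempty (Fin B) := Fin.pos_iff_nonempty.mp hB
  have hm0 : 0 ≤ m := le_trans (norm_nonneg _) (hm ⟨0, hB⟩)
  have hmax1 : (1:ℝ) ≤ max 1 (m / lam) := le_max_left _ _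
  intro K
  induction K using Nat.strong_induction_on with
  | _ K IH =>
    intro w
    rcases lt_or_ge K T with hKT | hTK
    · -- short word
      calc ‖wordProd A w‖ ≤ m ^ K := norm_wordProd_le_pow hd A hm K w
      _ = (m / lam) ^ K * lam ^ K := by
          rw [div_pow, div_mul_eq_mul_div, mul_div_assoc]
          rw [div_self (by positivity), mul_one]
      _ ≤ (max 1 (m / lam)) ^ K * lam ^ K := by
          have := pow_le_pow_left₀ (by positivity) (le_max_right 1 (m / lam)) K
          exact mul_le_mul_of_nonneg_right this (by positivity)
      _ ≤ (max 1 (m / lam)) ^ T * lam ^ K := by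
          have := pow_le_pow_right₀ hmax1 (le_of_lt hKT)
          exact mul_le_mul_of_nonneg_right this (by positivity)
    · -- split off the first T letters
      rcases Nat.exists_eq_add_of_le hTK with ⟨n, rfl⟩
      rw [wordProd_add A w]
      have h1 := hjsrT (fun i => w (Fin.castAdd n i))
      have h2 := IH n (by omega) (fun j => w (Fin.natAdd T j))
      calc ‖_ * _‖ ≤ ‖wordProd A (fun i => w (Fin.castAdd n i))‖ *
            ‖wordProd A (fun j => w (Fin.natAdd T j))‖ := norm_mul_le _ _
      _ ≤ lam ^ T * ((max 1 (m / lam)) ^ T * lam ^ n) := by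
          refine mul_le_mul h1 h2 (norm_nonneg _) (by positivity)
      _ = (max 1 (m / lam)) ^ T * lam ^ (T + n) := by ring


section Rec
variable {B d : ℕ} (A : Fin B → Matrix (Fin d) (Fin d) ℂ) (V : Fin d → ℂ)

lemma sum_mulVec {ι : Type*} (S : Finset ι) (f : ι → Matrix (Fin d) (Fin d) ℂ) (v : Fin d → ℂ) :
    (∑ i ∈ S, f i).mulVec v = ∑ i ∈ S, (f i).mulVec v := by
  ext j
  simp only [Matrix.mulVec, dotProduct, Finset.sum_apply, Matrix.sum_apply,
    Finset.sum_mul]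
  rw [Finset.sum_comm]

lemma mulVec_sum {ι : Type*} (S : Finset ι) (M : Matrix (Fin d) (Fin d) ℂ) (v : ι → Fin d → ℂ) :
    M.mulVec (∑ i ∈ S, v i) = ∑ i ∈ S, M.mulVec (v i) := by
  rw [← Matrix.mulVecLin_apply, map_sum]
  simp [Matrix.mulVecLin_apply]

lemma pow_mulVec {μ : ℂ} (hQ : (∑ r, A r).mulVec V = μ • V) :
    ∀ K : ℕ, ((∑ r, A r) ^ K).mulVec V = μ ^ K • V := by
  intro K
  induction K with
  | zero => simp [Matrix.one_mulVec]
  | succ n ih =>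
    rw [pow_succ, ← Matrix.mulVec_mulVec, hQ, Matrix.mulVec_smul, ih, pow_succ]
    rw [smul_smul, mul_comm]

lemma sum_wordProd_mulVec {μ : ℂ} (hQ : (∑ r, A r).mulVec V = μ • V) (K : ℕ) :
    ∑ w : Fin K → Fin B, (wordProd A w).mulVec V = μ ^ K • V := by
  rw [← sum_mulVec, sum_wordProd, pow_mulVec A V hQ]

lemma runSum_succ (hB : 2 ≤ B) {μ : ℂ} (hQ : (∑ r, A r).mulVec V = μ • V)
    (r : Fin B) {x : ℝ} (hx1 : (r : ℝ) / B ≤ x) (hx2 : x < ((r : ℝ) + 1) / B) (K : ℕ) :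
    runSum A V (K + 1) x =
      μ ^ K • (∑ s ∈ Finset.univ.filter fun s : Fin B => s < r, (A s).mulVec V) +
        (A r).mulVec (runSum A V K (B * x - r)) := by
  have hB0 : (0:ℝ) < B := by exact_mod_cast (by omega : 0 < B)
  have hB1 : 1 ≤ B := by omega
  rw [runSum, sum_words_cons]
  have hinner : ∀ s : Fin B,
      (∑ w : Fin K → Fin B,
        if wordVal (Fin.cons s w) ≤ x then (wordProd A (Fin.cons s w)).mulVec V else 0)
      = if s < r then μ ^ K • ((A s).mulVec V)
        else if s = r then (A r).mulVec (runSum A V K (B * x - r)) else 0 := by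
    intro s
    rcases lt_trichotomy s r with hsr | hsr | hsr
    · rw [if_pos hsr]
      have hcond : ∀ w : Fin K → Fin B, wordVal (Fin.cons s w) ≤ x := by
        intro w
        rw [wordVal_cons, ← add_div]
        have h1 : (s:ℝ) + 1 ≤ (r:ℝ) := by
          have h : (s:ℕ) + 1 ≤ (r:ℕ) := hsr
          exact_mod_cast h
        have h2 : wordVal w < 1 := wordVal_lt_one hB1 w
        calc ((s:ℝ) + wordVal w) / B ≤ (r:ℝ) / B := by
              exact (div_le_div_iff_of_pos_right hB0).mpr (by linarith)
        _ ≤ x := hx1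
      calc (∑ w : Fin K → Fin B,
            if wordVal (Fin.cons s w) ≤ x then (wordProd A (Fin.cons s w)).mulVec V else 0)
          = ∑ w : Fin K → Fin B, (A s).mulVec ((wordProd A w).mulVec V) := by
            refine Finset.sum_congr rfl fun w _ => ?_
            rw [if_pos (hcond w), wordProd_cons, ← Matrix.mulVec_mulVec]
      _ = (A s).mulVec (∑ w : Fin K → Fin B, (wordProd A w).mulVec V) :=
            (mulVec_sum _ _ _).symm
      _ = μ ^ K • ((A s).mulVec V) := by
            rw [sum_wordProd_mulVec A V hQ, Matrix.mulVec_smul]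
    · subst hsr
      rw [if_neg (lt_irrefl s), if_pos rfl]
      have hcond : ∀ w : Fin K → Fin B,
          (wordVal (Fin.cons s w) ≤ x ↔ wordVal w ≤ B * x - s) := by
        intro w
        rw [wordVal_cons, ← add_div, div_le_iff₀ hB0]
        constructor <;> intro h <;> nlinarith [h]
      calc (∑ w : Fin K → Fin B,
            if wordVal (Fin.cons s w) ≤ x then (wordProd A (Fin.cons s w)).mulVec V else 0)
          = ∑ w : Fin K → Fin B, (A s).mulVec
              (if wordVal w ≤ B * x - s then (wordProd A w).mulVec V else 0) := by
            refine Finset.sum_congr rfl fun w _ => ?_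
            by_cases h : wordVal w ≤ B * x - s
            · rw [if_pos ((hcond w).mpr h), if_pos h, wordProd_cons, ← Matrix.mulVec_mulVec]
            · rw [if_neg (fun hc => h ((hcond w).mp hc)), if_neg h, Matrix.mulVec_zero]
      _ = (A s).mulVec (runSum A V K (B * x - s)) := by rw [← mulVec_sum, runSum]
    · rw [if_neg (not_lt.mpr hsr.le), if_neg (ne_of_gt hsr)]
      refine Finset.sum_eq_zero fun w _ => ?_
      rw [if_neg]
      rw [wordVal_cons, ← add_div]
      have h1 : (r:ℝ) + 1 ≤ (s:ℝ) := by
        have h : (r:ℕ) + 1 ≤ (s:ℕ) := hsr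
        exact_mod_cast h
      have h2 : 0 ≤ wordVal w := wordVal_nonneg w
      intro hc
      have : x < ((s:ℝ) + wordVal w) / B := by
        calc x < ((r:ℝ) + 1) / B := hx2
        _ ≤ ((s:ℝ) + wordVal w) / B := (div_le_div_iff_of_pos_right hB0).mpr (by linarith)
      linarith
  rw [Finset.sum_congr rfl fun s _ => hinner s]
  rw [← Finset.sum_filter_add_sum_filter_not Finset.univ (fun s => s < r)]
  congr 1
  · rw [Finset.smul_sum]
    refine Finset.sum_congr rfl fun s hs => ?_
    rw [if_pos (Finset.mem_filter.mp hs).2]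
  · rw [Finset.sum_congr rfl (fun s hs => if_neg (Finset.mem_filter.mp hs).2)]
    rw [Finset.sum_ite_eq' _ r _]
    rw [if_pos (Finset.mem_filter.mpr ⟨Finset.mem_univ r, lt_irrefl r⟩)]

lemma norm_ite_sub_ite {c₁ c₂ : Prop} [Decidable c₁] [Decidable c₂] (t : Fin d → ℂ) :
    ‖(if c₁ then t else 0) - (if c₂ then t else 0)‖ ≤ ‖t‖ := by
  split_ifs <;> simp

lemma norm_runSum_succ_sub (hB : 2 ≤ B) {μ : ℂ} (hQ : (∑ r, A r).mulVec V = μ • V)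
    {lam C₀ : ℝ} (hlam : 0 ≤ lam) (hC : 0 ≤ C₀)
    (hW : ∀ (K : ℕ) (w : Fin K → Fin B), ‖wordProd A w‖ ≤ C₀ * lam ^ K)
    (K : ℕ) (x : ℝ) :
    ‖runSum A V (K + 1) x - μ • runSum A V K x‖ ≤ B * (C₀ * lam ^ (K + 1) * ‖V‖) := by
  have hB0 : (0:ℝ) < B := by exact_mod_cast (by omega : 0 < B)
  have hB1 : 1 ≤ B := by omega
  have key : ∀ (w : Fin K → Fin B) (s : Fin B),
      ‖(wordProd A w * A s).mulVec V‖ ≤ C₀ * lam ^ (K + 1) * ‖V‖ := by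
    intro w s
    calc ‖(wordProd A w * A s).mulVec V‖ ≤ ‖wordProd A w * A s‖ * ‖V‖ :=
          Matrix.linfty_opNorm_mulVec _ _
    _ = ‖wordProd A (Fin.snoc w s)‖ * ‖V‖ := by rw [wordProd_snoc]
    _ ≤ C₀ * lam ^ (K + 1) * ‖V‖ :=
          mul_le_mul_of_nonneg_right (hW _ _) (norm_nonneg _)
  have h1 : runSum A V (K + 1) x
      = ∑ w : Fin K → Fin B, ∑ s : Fin B,
          (if wordVal w + (s : ℝ) / (B : ℝ) ^ (K + 1) ≤ x
            then (wordProd A w * A s).mulVec V else 0) := by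
    rw [runSum, sum_words_snoc]
    exact Finset.sum_congr rfl fun w _ => Finset.sum_congr rfl fun s _ => by
      rw [wordVal_snoc, wordProd_snoc]
  have h2 : μ • runSum A V K x
      = ∑ w : Fin K → Fin B, ∑ s : Fin B,
          (if wordVal w ≤ x then (wordProd A w * A s).mulVec V else 0) := by
    rw [runSum, Finset.smul_sum]
    refine Finset.sum_congr rfl fun w _ => ?_
    rw [smul_ite, smul_zero]
    split_ifs with h
    · rw [← Matrix.mulVec_smul, ← hQ, Matrix.mulVec_mulVec, Finset.mul_sum, sum_mulVec]
    · simp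
  rw [h1, h2, ← Finset.sum_sub_distrib]
  have hinner : ∀ w : Fin K → Fin B,
      (∑ s : Fin B, (if wordVal w + (s : ℝ) / (B : ℝ) ^ (K + 1) ≤ x
          then (wordProd A w * A s).mulVec V else 0))
      - (∑ s : Fin B, (if wordVal w ≤ x then (wordProd A w * A s).mulVec V else 0))
      = ∑ s : Fin B, ((if wordVal w + (s : ℝ) / (B : ℝ) ^ (K + 1) ≤ x
          then (wordProd A w * A s).mulVec V else 0)
        - (if wordVal w ≤ x then (wordProd A w * A s).mulVec V else 0)) := by
    intro w; rw [← Finset.sum_sub_distrib]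
  rw [Finset.sum_congr rfl fun w _ => hinner w]
  set bad : Finset (Fin K → Fin B) :=
    Finset.univ.filter (fun w => wordVal w ≤ x ∧ x < wordVal w + ((B : ℝ) ^ K)⁻¹) with hbad
  have hsB : ∀ s : Fin B, (s : ℝ) / (B : ℝ) ^ (K + 1) < ((B : ℝ) ^ K)⁻¹ := by
    intro s
    have hs : (s : ℝ) < B := by exact_mod_cast s.is_lt
    rw [div_lt_iff₀ (by positivity), pow_succ]
    have heq : ((B : ℝ) ^ K)⁻¹ * ((B:ℝ) ^ K * B) = B := by
      field_simp
    rw [heq]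
    exact hs
  have hvanish : ∀ w ∈ Finset.univ, w ∉ bad →
      (∑ s : Fin B, ((if wordVal w + (s : ℝ) / (B : ℝ) ^ (K + 1) ≤ x
          then (wordProd A w * A s).mulVec V else 0)
        - (if wordVal w ≤ x then (wordProd A w * A s).mulVec V else 0))) = 0 := by
    intro w _ hw
    rw [hbad, Finset.mem_filter] at hw
    push_neg at hw
    refine Finset.sum_eq_zero fun s _ => ?_
    by_cases hvx : wordVal w ≤ x
    · have hx' : wordVal w + ((B : ℝ) ^ K)⁻¹ ≤ x := hw (Finset.mem_univ w) hvx
      rw [if_pos (show wordVal w + (s:ℝ)/(B:ℝ)^(K+1) ≤ x by linarith [hsB s]),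
        if_pos hvx, sub_self]
    · rw [if_neg hvx, if_neg, sub_self]
      intro hc
      have : 0 ≤ (s : ℝ) / (B : ℝ) ^ (K + 1) := by positivity
      exact hvx (by linarith)
  rw [← Finset.sum_subset (Finset.subset_univ bad) hvanish]
  have hcard : bad.card ≤ 1 := by
    rw [Finset.card_le_one]
    intro w hw v hv
    rw [hbad, Finset.mem_filter] at hw hv
    refine wordVal_unique_Ioc hB1 (a := x - ((B : ℝ) ^ K)⁻¹) (b := x) (by linarith)
      ⟨by linarith [hw.2.2], hw.2.1⟩ ⟨by linarith [hv.2.2], hv.2.1⟩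
  calc ‖∑ w ∈ bad, ∑ s : Fin B, ((if wordVal w + (s : ℝ) / (B : ℝ) ^ (K + 1) ≤ x
          then (wordProd A w * A s).mulVec V else 0)
        - (if wordVal w ≤ x then (wordProd A w * A s).mulVec V else 0))‖
      ≤ ∑ w ∈ bad, ‖∑ s : Fin B, ((if wordVal w + (s : ℝ) / (B : ℝ) ^ (K + 1) ≤ x
          then (wordProd A w * A s).mulVec V else 0)
        - (if wordVal w ≤ x then (wordProd A w * A s).mulVec V else 0))‖ :=
        norm_sum_le _ _
  _ ≤ ∑ w ∈ bad, (B * (C₀ * lam ^ (K + 1) * ‖V‖)) := by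
      refine Finset.sum_le_sum fun w _ => ?_
      calc ‖∑ s : Fin B, _‖ ≤ ∑ s : Fin B, (C₀ * lam ^ (K + 1) * ‖V‖) := by
            refine (norm_sum_le _ _).trans (Finset.sum_le_sum fun s _ => ?_)
            exact (norm_ite_sub_ite _).trans (key w s)
      _ = B * (C₀ * lam ^ (K + 1) * ‖V‖) := by
            rw [Finset.sum_const, Finset.card_univ, Fintype.card_fin, nsmul_eq_mul]
  _ ≤ 1 * (B * (C₀ * lam ^ (K + 1) * ‖V‖)) := by
      rw [Finset.sum_const, nsmul_eq_mul]
      have hb : (0:ℝ) ≤ B * (C₀ * lam ^ (K + 1) * ‖V‖) := by positivity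
      have : (bad.card : ℝ) ≤ 1 := by exact_mod_cast hcard
      exact mul_le_mul_of_nonneg_right this hb
  _ = _ := one_mul _

lemma norm_runSum_sub (hB : 2 ≤ B)
    {lam C₀ : ℝ} (hlam : 0 ≤ lam) (hC : 0 ≤ C₀)
    (hW : ∀ (K : ℕ) (w : Fin K → Fin B), ‖wordProd A w‖ ≤ C₀ * lam ^ K)
    (K : ℕ) {x y : ℝ} (hxy : x ≤ y) (hyx : y - x ≤ ((B : ℝ) ^ K)⁻¹) :
    ‖runSum A V K y - runSum A V K x‖ ≤ C₀ * lam ^ K * ‖V‖ := by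
  have hB1 : 1 ≤ B := by omega
  have key : ∀ w : Fin K → Fin B, ‖(wordProd A w).mulVec V‖ ≤ C₀ * lam ^ K * ‖V‖ := by
    intro w
    calc ‖(wordProd A w).mulVec V‖ ≤ ‖wordProd A w‖ * ‖V‖ := Matrix.linfty_opNorm_mulVec _ _
    _ ≤ C₀ * lam ^ K * ‖V‖ := mul_le_mul_of_nonneg_right (hW _ _) (norm_nonneg _)
  rw [runSum, runSum, ← Finset.sum_sub_distrib]
  set bad : Finset (Fin K → Fin B) :=
    Finset.univ.filter (fun w => x < wordVal w ∧ wordVal w ≤ y) with hbad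
  have hvanish : ∀ w ∈ Finset.univ, w ∉ bad →
      ((if wordVal w ≤ y then (wordProd A w).mulVec V else 0)
        - (if wordVal w ≤ x then (wordProd A w).mulVec V else 0)) = 0 := by
    intro w _ hw
    rw [hbad, Finset.mem_filter] at hw
    push_neg at hw
    by_cases hx' : wordVal w ≤ x
    · rw [if_pos (hx'.trans hxy), if_pos hx', sub_self]
    · rw [if_neg hx', if_neg, sub_self]
      exact fun hc => absurd hc (hw (Finset.mem_univ w) (not_le.mp hx')).not_ge
  rw [← Finset.sum_subset (Finset.subset_univ bad) hvanish]
  have hcard : bad.card ≤ 1 := by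
    rw [Finset.card_le_one]
    intro w hw v hv
    rw [hbad, Finset.mem_filter] at hw hv
    exact wordVal_unique_Ioc hB1 (a := x) (b := y) hyx hw.2 hv.2
  calc ‖∑ w ∈ bad, _‖ ≤ ∑ w ∈ bad, (C₀ * lam ^ K * ‖V‖) := by
        refine (norm_sum_le _ _).trans (Finset.sum_le_sum fun w _ => ?_)
        exact (norm_ite_sub_ite _).trans (key w)
  _ ≤ 1 * (C₀ * lam ^ K * ‖V‖) := by
        rw [Finset.sum_const, nsmul_eq_mul]
        have : (bad.card : ℝ) ≤ 1 := by exact_mod_cast hcard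
        exact mul_le_mul_of_nonneg_right this (by positivity)
  _ = _ := one_mul _

lemma norm_runSum_zero (hB : 2 ≤ B)
    {lam C₀ : ℝ} (hlam : 0 ≤ lam) (hC : 0 ≤ C₀)
    (hW : ∀ (K : ℕ) (w : Fin K → Fin B), ‖wordProd A w‖ ≤ C₀ * lam ^ K) (K : ℕ) :
    ‖runSum A V K 0‖ ≤ C₀ * lam ^ K * ‖V‖ := by
  have hB1 : 1 ≤ B := by omega
  have key : ∀ w : Fin K → Fin B, ‖(wordProd A w).mulVec V‖ ≤ C₀ * lam ^ K * ‖V‖ := by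
    intro w
    calc ‖(wordProd A w).mulVec V‖ ≤ ‖wordProd A w‖ * ‖V‖ := Matrix.linfty_opNorm_mulVec _ _
    _ ≤ C₀ * lam ^ K * ‖V‖ := mul_le_mul_of_nonneg_right (hW _ _) (norm_nonneg _)
  rw [runSum]
  set bad : Finset (Fin K → Fin B) :=
    Finset.univ.filter (fun w => wordVal w ≤ (0:ℝ)) with hbad
  rw [← Finset.sum_subset (Finset.subset_univ bad) (fun w _ hw => by
    rw [hbad, Finset.mem_filter] at hw
    push_neg at hw
    exact if_neg (hw (Finset.mem_univ w)).not_ge)]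
  have hcard : bad.card ≤ 1 := by
    rw [Finset.card_le_one]
    intro w hw v hv
    rw [hbad, Finset.mem_filter] at hw hv
    refine wordVal_injective hB1 ?_
    rw [le_antisymm hw.2 (wordVal_nonneg w), le_antisymm hv.2 (wordVal_nonneg v)]
  calc ‖∑ w ∈ bad, _‖ ≤ ∑ w ∈ bad, (C₀ * lam ^ K * ‖V‖) := by
        refine (norm_sum_le _ _).trans (Finset.sum_le_sum fun w _ => ?_)
        split_ifs
        · exact key w
        · simp [norm_nonneg]
          positivity
  _ ≤ 1 * (C₀ * lam ^ K * ‖V‖) := by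
        rw [Finset.sum_const, nsmul_eq_mul]
        have : (bad.card : ℝ) ≤ 1 := by exact_mod_cast hcard
        exact mul_le_mul_of_nonneg_right this (by positivity)
  _ = _ := one_mul _

lemma runSum_one (hB : 2 ≤ B) {μ : ℂ} (hQ : (∑ r, A r).mulVec V = μ • V) (K : ℕ) :
    runSum A V K 1 = μ ^ K • V := by
  have hB1 : 1 ≤ B := by omega
  rw [runSum, ← sum_wordProd_mulVec A V hQ K]
  refine Finset.sum_congr rfl fun w _ => if_pos (wordVal_lt_one hB1 w).le

end Rec

end DilAux

set_option maxHeartbeats 2000000 in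
theorem dilation_solution_holder_jsr (B d : ℕ) (hB : 2 ≤ B) (hd : 1 ≤ d)
    (A : Fin B → Matrix (Fin d) (Fin d) ℂ)
    (ρ : ℝ) (hρ : 0 < ρ) (ω : ℂ) (hω : ‖ω‖ = 1)
    (V : Fin d → ℂ) (hV : (∑ r, A r).mulVec V = ((ρ : ℂ) * ω) • V)
    -- hypothesis (jsr_λ)
    (lam : ℝ) (hlam : 0 < lam) (hlamρ : lam < ρ)
    (hjsr : ∃ T : ℕ, 1 ≤ T ∧ ∀ w : Fin T → Fin B, ‖wordProd A w‖ ≤ lam ^ T) :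
    ∃ F : ℝ → Fin d → ℂ,
      ContinuousOn F (Set.Icc 0 1) ∧ DilationEq A ρ ω V F ∧
      (∀ Ψ : ℝ → Fin d → ℂ, ContinuousOn Ψ (Set.Icc 0 1) → DilationEq A ρ ω V Ψ →
        Set.EqOn Ψ F (Set.Icc 0 1)) ∧
      ∃ c : ℝ, 0 ≤ c ∧ ∀ x ∈ Set.Icc (0:ℝ) 1, ∀ y ∈ Set.Icc (0:ℝ) 1,
        ‖F y - F x‖ ≤ c * |y - x| ^ Real.logb B (ρ / lam) := by
  classical
  obtain ⟨T, hT, hjsrT⟩ := hjsr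
  have hd0 : 0 < d := hd
  have hB0 : (0:ℝ) < B := by exact_mod_cast (by omega : 0 < B)
  have hB1R : (1:ℝ) < B := by exact_mod_cast (by omega : 1 < B)
  have hBne1 : (B:ℝ) ≠ 1 := ne_of_gt hB1R
  set m : ℝ := ∑ r, ‖A r‖ with hm
  have hmb : ∀ r, ‖A r‖ ≤ m :=
    fun r => Finset.single_le_sum (f := fun r => ‖A r‖) (fun i _ => norm_nonneg _)
      (Finset.mem_univ r)
  set C₀ : ℝ := (max 1 (m / lam)) ^ T with hC₀def
  have hC₀0 : 0 ≤ C₀ := pow_nonneg (le_trans zero_le_one (le_max_left _ _)) T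
  have hW : ∀ (K : ℕ) (w : Fin K → Fin B), ‖wordProd A w‖ ≤ C₀ * lam ^ K :=
    fun K w => DilAux.norm_wordProd_le hd0 (by omega) A hlam hT hjsrT hmb K w
  set μ : ℂ := (ρ : ℂ) * ω with hμdef
  have hμnorm : ‖μ‖ = ρ := by
    rw [hμdef, norm_mul, hω, mul_one, Complex.norm_real, Real.norm_eq_abs, abs_of_pos hρ]
  have hμ0 : μ ≠ 0 := by
    intro h
    rw [h, norm_zero] at hμnorm
    exact absurd hμnorm.symm (ne_of_gt hρ)
  have hinvnorm : ‖μ⁻¹‖ = ρ⁻¹ := by rw [norm_inv, hμnorm]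
  set q : ℝ := lam / ρ with hqdef
  have hq0 : 0 < q := div_pos hlam hρ
  have hq1 : q < 1 := (div_lt_one hρ).mpr hlamρ
  set g : ℕ → ℝ → Fin d → ℂ := fun K x => (μ⁻¹) ^ K • runSum A V K x with hgdef
  have hnorm_smul : ∀ (K : ℕ) (u : Fin d → ℂ), ‖(μ⁻¹) ^ K • u‖ = (ρ⁻¹) ^ K * ‖u‖ := by
    intro K u
    rw [norm_smul, norm_pow, hinvnorm]
  have hpow_one : ∀ K : ℕ, (μ⁻¹) ^ K * μ ^ K = 1 := by
    intro K
    rw [inv_pow, inv_mul_cancel₀ (pow_ne_zero K hμ0)]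
  have hpow_mul : ∀ K : ℕ, (μ⁻¹) ^ (K + 1) * μ ^ K = μ⁻¹ := by
    intro K
    rw [pow_succ, mul_comm ((μ⁻¹) ^ K) μ⁻¹, mul_assoc, hpow_one K, mul_one]
  set Cc : ℝ := B * C₀ * ‖V‖ * q with hCcdef
  have hCc0 : 0 ≤ Cc := by positivity
  -- Cauchy estimate
  have hCauchyEst : ∀ (x : ℝ) (K : ℕ), dist (g K x) (g (K + 1) x) ≤ Cc * q ^ K := by
    intro x K
    have hsc : (μ⁻¹) ^ (K + 1) * μ = (μ⁻¹) ^ K := by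
      rw [pow_succ, mul_assoc, inv_mul_cancel₀ hμ0, mul_one]
    have hrw : g (K + 1) x - g K x
        = (μ⁻¹) ^ (K + 1) • (runSum A V (K + 1) x - μ • runSum A V K x) := by
      rw [hgdef]
      simp only
      rw [smul_sub, smul_smul, hsc]
    rw [dist_comm, dist_eq_norm, hrw, hnorm_smul]
    have h1 := DilAux.norm_runSum_succ_sub A V hB hV hlam.le hC₀0 hW K x
    calc (ρ⁻¹) ^ (K + 1) * ‖runSum A V (K + 1) x - μ • runSum A V K x‖
        ≤ (ρ⁻¹) ^ (K + 1) * (B * (C₀ * lam ^ (K + 1) * ‖V‖)) := by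
          exact mul_le_mul_of_nonneg_left h1 (by positivity)
    _ = Cc * q ^ K := by
          rw [hCcdef, hqdef]
          ring
  have hcauchy : ∀ x : ℝ, CauchySeq (fun K => g K x) :=
    fun x => cauchySeq_of_le_geometric q Cc hq1 (hCauchyEst x)
  choose F hF using fun x => cauchySeq_tendsto_of_complete (hcauchy x)
  have htail : ∀ (x : ℝ) (K : ℕ), dist (g K x) (F x) ≤ Cc * q ^ K / (1 - q) :=
    fun x K => dist_le_of_le_geometric_of_tendsto q Cc hq1 (hCauchyEst x) (hF x) K
  -- F 1 = V
  have hgone : ∀ K : ℕ, g K 1 = V := by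
    intro K
    rw [hgdef]
    simp only
    rw [DilAux.runSum_one A V hB hV K, smul_smul, hpow_one K, one_smul]
  have hF1 : F 1 = V := by
    refine tendsto_nhds_unique (hF 1) ?_
    simp only [hgone]
    exact tendsto_const_nhds
  -- F 0 = 0
  have hF0 : F 0 = 0 := by
    refine tendsto_nhds_unique (hF 0) ?_
    have hb : ∀ K : ℕ, ‖g K 0‖ ≤ (C₀ * ‖V‖) * q ^ K := by
      intro K
      rw [hgdef]
      simp only
      rw [hnorm_smul]
      calc (ρ⁻¹) ^ K * ‖runSum A V K 0‖
          ≤ (ρ⁻¹) ^ K * (C₀ * lam ^ K * ‖V‖) := by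
            exact mul_le_mul_of_nonneg_left
              (DilAux.norm_runSum_zero A V hB hlam.le hC₀0 hW K) (by positivity)
      _ = (C₀ * ‖V‖) * q ^ K := by
            rw [hqdef]
            field_simp
            ring
    refine squeeze_zero_norm hb ?_
    rw [show (0:ℝ) = (C₀ * ‖V‖) * 0 by ring]
    exact (tendsto_pow_atTop_nhds_zero_of_lt_one hq0.le hq1).const_mul _
  -- the dilation recursion for F
  have hFrec : ∀ r : Fin B, ∀ x : ℝ, (r : ℝ) / B ≤ x → x < ((r : ℝ) + 1) / B →
      F x = μ⁻¹ • ((∑ s ∈ Finset.univ.filter fun s : Fin B => s < r, (A s).mulVec V) +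
        (A r).mulVec (F (B * x - r))) := by
    intro r x hx1 hx2
    set W : Fin d → ℂ := ∑ s ∈ Finset.univ.filter fun s : Fin B => s < r, (A s).mulVec V
      with hWdef
    have hgrec : ∀ K : ℕ, g (K + 1) x = μ⁻¹ • (W + (A r).mulVec (g K (B * x - r))) := by
      intro K
      rw [hgdef]
      simp only
      rw [DilAux.runSum_succ A V hB hV r hx1 hx2 K]
      rw [smul_add, smul_smul, hpow_mul K]
      rw [smul_add]
      congr 1
      rw [← Matrix.mulVec_smul, ← Matrix.mulVec_smul, smul_smul, pow_succ,
        mul_comm ((μ⁻¹) ^ K) μ⁻¹]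
    have hL : Filter.Tendsto (fun K => g (K + 1) x) Filter.atTop (nhds (F x)) :=
      (hF x).comp (Filter.tendsto_add_atTop_nat 1)
    have hcont : Continuous fun v : Fin d → ℂ => (A r).mulVec v := by
      have : (fun v : Fin d → ℂ => (A r).mulVec v) = fun v => (A r).mulVecLin v := by
        funext v
        rw [Matrix.mulVecLin_apply]
      rw [this]
      exact LinearMap.continuous_of_finiteDimensional _
    have hR : Filter.Tendsto (fun K => μ⁻¹ • (W + (A r).mulVec (g K (B * x - r))))
        Filter.atTop (nhds (μ⁻¹ • (W + (A r).mulVec (F (B * x - r))))) := by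
      refine Filter.Tendsto.const_smul ?_ _
      refine Filter.Tendsto.const_add _ ?_
      exact (hcont.tendsto _).comp (hF (B * x - r))
    refine tendsto_nhds_unique hL ?_
    simp only [hgrec]
    exact hR
  have hFeq : DilationEq A ρ ω V F := ⟨hF0, hF1, hFrec⟩
  -- per-scale Hölder estimate
  set Ct : ℝ := 2 * (Cc / (1 - q)) + C₀ * ‖V‖ with hCtdef
  have hCt0 : 0 ≤ Ct := by
    have : 0 ≤ Cc / (1 - q) := div_nonneg hCc0 (by linarith)
    positivity
  have hKey : ∀ (K : ℕ) (x y : ℝ), x ≤ y → y - x ≤ ((B:ℝ) ^ K)⁻¹ →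
      ‖F y - F x‖ ≤ Ct * q ^ K := by
    intro K x y hxy hyx
    have h1 : dist (F y) (g K y) ≤ Cc * q ^ K / (1 - q) := by
      rw [dist_comm]; exact htail y K
    have h2 : dist (g K x) (F x) ≤ Cc * q ^ K / (1 - q) := htail x K
    have h3 : dist (g K y) (g K x) ≤ (C₀ * ‖V‖) * q ^ K := by
      rw [dist_eq_norm, hgdef]
      simp only
      rw [← smul_sub, hnorm_smul]
      calc (ρ⁻¹) ^ K * ‖runSum A V K y - runSum A V K x‖
          ≤ (ρ⁻¹) ^ K * (C₀ * lam ^ K * ‖V‖) := by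
            exact mul_le_mul_of_nonneg_left
              (DilAux.norm_runSum_sub A V hB hlam.le hC₀0 hW K hxy hyx) (by positivity)
      _ = (C₀ * ‖V‖) * q ^ K := by
            rw [hqdef]; field_simp; ring
    calc ‖F y - F x‖ = dist (F y) (F x) := (dist_eq_norm _ _).symm
    _ ≤ dist (F y) (g K y) + dist (g K y) (g K x) + dist (g K x) (F x) :=
        dist_triangle4 _ _ _ _
    _ ≤ Cc * q ^ K / (1 - q) + (C₀ * ‖V‖) * q ^ K + Cc * q ^ K / (1 - q) := by
        gcongr
    _ = Ct * q ^ K := by rw [hCtdef]; ring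
  -- the Hölder exponent
  set α : ℝ := Real.logb B (ρ / lam) with hαdef
  have hα0 : 0 < α := Real.logb_pos hB1R ((one_lt_div hlam).mpr hlamρ)
  have hBα : (B:ℝ) ^ α = ρ / lam := Real.rpow_logb hB0 hBne1 (div_pos hρ hlam)
  have hqpow : ∀ K : ℕ, q ^ K = (((B:ℝ) ^ K)⁻¹) ^ α := by
    intro K
    have hBK0 : (0:ℝ) < (B:ℝ) ^ K := by positivity
    rw [Real.inv_rpow hBK0.le, ← Real.rpow_natCast (B:ℝ) K, ← Real.rpow_mul hB0.le,
      mul_comm (K:ℝ) α, Real.rpow_mul hB0.le, hBα, Real.rpow_natCast]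
    rw [hqdef, ← inv_pow, inv_div]
  set c : ℝ := Ct * (B:ℝ) ^ α with hcdef
  have hc0 : 0 ≤ c := mul_nonneg hCt0 (Real.rpow_nonneg hB0.le α)
  -- assembled Hölder bound
  have hHolder : ∀ x ∈ Set.Icc (0:ℝ) 1, ∀ y ∈ Set.Icc (0:ℝ) 1,
      ‖F y - F x‖ ≤ c * |y - x| ^ α := by
    have main : ∀ x ∈ Set.Icc (0:ℝ) 1, ∀ y ∈ Set.Icc (0:ℝ) 1, x ≤ y →
        ‖F y - F x‖ ≤ c * |y - x| ^ α := by
      intro x hx y hy hxy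
      rcases eq_or_lt_of_le hxy with rfl | hlt
      · rw [sub_self, sub_self, norm_zero, abs_zero, Real.zero_rpow (ne_of_gt hα0), mul_zero]
      · set h : ℝ := y - x with hhdef
        have hh0 : 0 < h := by rw [hhdef]; linarith
        have hh1 : h ≤ 1 := by
          rw [hhdef]
          have := hx.1
          have := hy.2
          linarith
        have hinv1 : 1 ≤ h⁻¹ := (one_le_inv₀ hh0).mpr hh1
        set L : ℝ := Real.logb B h⁻¹ with hLdef
        have hL0 : 0 ≤ L := Real.logb_nonneg hB1R hinv1
        set K : ℕ := ⌊L⌋₊ with hKdef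
        have hKL : (K:ℝ) ≤ L := Nat.floor_le hL0
        have hLK : L < K + 1 := Nat.lt_floor_add_one L
        have hBL : (B:ℝ) ^ L = h⁻¹ := Real.rpow_logb hB0 hBne1 (by positivity)
        have h1 : (B:ℝ) ^ K ≤ h⁻¹ := by
          rw [← hBL, ← Real.rpow_natCast (B:ℝ) K]
          exact Real.rpow_le_rpow_of_exponent_le hB1R.le hKL
        have h2 : h⁻¹ < (B:ℝ) ^ K * B := by
          rw [← hBL]
          calc (B:ℝ) ^ L < (B:ℝ) ^ ((K:ℝ) + 1) :=
            Real.rpow_lt_rpow_of_exponent_lt hB1R hLK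
          _ = (B:ℝ) ^ K * B := by
              rw [Real.rpow_add hB0, Real.rpow_natCast, Real.rpow_one]
        have hstep : h ≤ ((B:ℝ) ^ K)⁻¹ := by
          rw [← inv_inv h]
          exact inv_anti₀ (by positivity) h1
        have hstep2 : ((B:ℝ) ^ K)⁻¹ ≤ B * h := by
          have hBK0 : (0:ℝ) < (B:ℝ) ^ K := by positivity
          have hx := mul_lt_mul_of_pos_right h2 hh0
          rw [inv_mul_cancel₀ (ne_of_gt hh0)] at hx
          rw [← one_div, div_le_iff₀ hBK0]
          nlinarith [hx, hBK0, hh0]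
        have hbound := hKey K x y hxy hstep
        calc ‖F y - F x‖ ≤ Ct * q ^ K := hbound
        _ = Ct * (((B:ℝ) ^ K)⁻¹) ^ α := by rw [hqpow K]
        _ ≤ Ct * ((B * h) ^ α) := by
            refine mul_le_mul_of_nonneg_left ?_ hCt0
            exact Real.rpow_le_rpow (by positivity) hstep2 hα0.le
        _ = c * |y - x| ^ α := by
            rw [abs_of_pos hh0, hcdef, Real.mul_rpow hB0.le hh0.le, ← mul_assoc]
    intro x hx y hy
    rcases le_total x y with hxy | hyx
    · exact main x hx y hy hxy
    · rw [norm_sub_rev, abs_sub_comm]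
      exact main y hy x hx hyx
  -- continuity of F on [0,1]
  have hFc : ContinuousOn F (Set.Icc 0 1) := by
    intro x hx
    have hbnd : ∀ y ∈ Set.Icc (0:ℝ) 1, dist (F y) (F x) ≤ c * |y - x| ^ α := by
      intro y hy
      rw [dist_eq_norm]
      exact hHolder x hx y hy
    have hcont : Filter.Tendsto (fun y : ℝ => c * |y - x| ^ α)
        (nhdsWithin x (Set.Icc 0 1)) (nhds 0) := by
      have h1 : Filter.Tendsto (fun y : ℝ => |y - x|) (nhds x) (nhds 0) := by
        have hcc : Continuous fun y : ℝ => |y - x| :=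
          (continuous_id.sub continuous_const).abs
        have h0 : |x - x| = (0:ℝ) := by simp
        simpa [h0] using hcc.tendsto x
      have h2 : Filter.Tendsto (fun t : ℝ => c * t ^ α) (nhds 0) (nhds 0) := by
        have hc : ContinuousAt (fun t : ℝ => t ^ α) 0 :=
          Real.continuousAt_rpow_const 0 α (Or.inr hα0.le)
        have h3 := hc.tendsto
        rw [Real.zero_rpow (ne_of_gt hα0)] at h3
        simpa [mul_zero] using h3.const_mul c
      exact (h2.comp h1).mono_left nhdsWithin_le_nhds
    rw [ContinuousWithinAt, tendsto_iff_dist_tendsto_zero]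
    refine squeeze_zero' (Filter.Eventually.of_forall fun y => dist_nonneg) ?_ hcont
    exact eventually_nhdsWithin_of_forall hbnd
  -- uniqueness
  have huniq : ∀ Ψ : ℝ → Fin d → ℂ, ContinuousOn Ψ (Set.Icc 0 1) → DilationEq A ρ ω V Ψ →
      Set.EqOn Ψ F (Set.Icc 0 1) := by
    intro Ψ hΨc hΨ
    obtain ⟨hΨ0, hΨ1, hΨrec⟩ := hΨ
    set D : ℝ → Fin d → ℂ := fun y => Ψ y - F y with hDdef
    have hDc : ContinuousOn D (Set.Icc 0 1) := hΨc.sub hFc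
    obtain ⟨M, hM⟩ := isCompact_Icc.exists_bound_of_continuousOn hDc
    set M' : ℝ := max M 0 with hM'def
    have hM' : ∀ y ∈ Set.Icc (0:ℝ) 1, ‖D y‖ ≤ M' := fun y hy => (hM y hy).trans (le_max_left _ _)
    have key : ∀ (K : ℕ), ∀ x ∈ Set.Ico (0:ℝ) 1, ∃ w : Fin K → Fin B,
        ∃ y ∈ Set.Ico (0:ℝ) 1, D x = (μ⁻¹) ^ K • (wordProd A w).mulVec (D y) := by
      intro K
      induction K with
      | zero =>
        intro x hx
        exact ⟨Fin.elim0, x, hx, by rw [DilAux.wordProd_zero, Matrix.one_mulVec, pow_zero,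
          one_smul]⟩
      | succ K ih =>
        intro x hx
        have hx0 : (0:ℝ) ≤ B * x := by
          have := hx.1; positivity
        have hxB : B * x < B := by nlinarith [hx.2, hB0]
        set n : ℕ := ⌊B * x⌋₊ with hndef
        have hnlt : n < B := by
          rw [hndef]
          exact_mod_cast Nat.floor_lt hx0 |>.mpr (by exact_mod_cast hxB)
        set r : Fin B := ⟨n, hnlt⟩ with hrdef
        have hr1 : (r : ℝ) / B ≤ x := by
          rw [div_le_iff₀ hB0]
          have : (n:ℝ) ≤ B * x := Nat.floor_le hx0
          rw [hrdef]
          simpa [mul_comm] using this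
        have hr2 : x < ((r : ℝ) + 1) / B := by
          rw [lt_div_iff₀ hB0]
          have : B * x < (n:ℝ) + 1 := Nat.lt_floor_add_one (B * x)
          rw [hrdef]
          simpa [mul_comm] using this
        have hy : B * x - (r:ℝ) ∈ Set.Ico (0:ℝ) 1 := by
          constructor
          · have : (n:ℝ) ≤ B * x := Nat.floor_le hx0
            rw [hrdef]; simpa using by linarith
          · have : B * x < (n:ℝ) + 1 := Nat.lt_floor_add_one (B * x)
            rw [hrdef]; simpa using by linarith
        have hDrec : D x = μ⁻¹ • (A r).mulVec (D (B * x - r)) := by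
          rw [hDdef]
          simp only
          rw [hΨrec r x hr1 hr2, hFrec r x hr1 hr2, ← smul_sub,
            add_sub_add_left_eq_sub, ← Matrix.mulVec_sub]
        obtain ⟨w, y, hymem, hywD⟩ := ih (B * x - r) hy
        refine ⟨Fin.cons r w, y, hymem, ?_⟩
        rw [hDrec, hywD, DilAux.wordProd_cons, ← Matrix.mulVec_mulVec,
          Matrix.mulVec_smul, smul_smul, pow_succ,
          mul_comm ((μ⁻¹) ^ K) μ⁻¹]
    intro x hx
    rcases lt_or_eq_of_le hx.2 with hx1 | hx1
    · have hxIco : x ∈ Set.Ico (0:ℝ) 1 := ⟨hx.1, hx1⟩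
      have hbound : ∀ K : ℕ, ‖D x‖ ≤ (C₀ * M') * q ^ K := by
        intro K
        obtain ⟨w, y, hymem, hD⟩ := key K x hxIco
        rw [hD, hnorm_smul]
        calc (ρ⁻¹) ^ K * ‖(wordProd A w).mulVec (D y)‖
            ≤ (ρ⁻¹) ^ K * ((C₀ * lam ^ K) * M') := by
              refine mul_le_mul_of_nonneg_left ?_ (by positivity)
              calc ‖(wordProd A w).mulVec (D y)‖ ≤ ‖wordProd A w‖ * ‖D y‖ :=
                Matrix.linfty_opNorm_mulVec _ _
              _ ≤ (C₀ * lam ^ K) * M' := by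
                  refine mul_le_mul (hW K w) (hM' y ⟨hymem.1, hymem.2.le⟩) (norm_nonneg _) ?_
                  positivity
        _ = (C₀ * M') * q ^ K := by rw [hqdef]; field_simp; ring
      have hlim : Filter.Tendsto (fun K : ℕ => (C₀ * M') * q ^ K) Filter.atTop (nhds 0) := by
        rw [show (0:ℝ) = (C₀ * M') * 0 by ring]
        exact (tendsto_pow_atTop_nhds_zero_of_lt_one hq0.le hq1).const_mul _
      have : ‖D x‖ ≤ 0 := ge_of_tendsto hlim (Filter.Eventually.of_forall hbound)
      have hDx : D x = 0 := norm_le_zero_iff.mp this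
      have := sub_eq_zero.mp hDx
      exact this
    · rw [hx1, hΨ1, hF1]
  exact ⟨F, hFc, hFeq, huniq, c, hc0, hHolder⟩
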